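/- Suppose each p_i is additionally positively L-homogeneous for a positive integer L. Let w ∈ ℝ^d, w ≠ 0, be a KKT point of the problem min{‖w‖² : m(w) ≥ 1}: min_{1≤i≤n} p_i(w) ≥ 1 and there exist α_1, …, α_n ≥ 0 with α_i·(p_i(w) − 1) = 0 for every i and w = Σ_{i=1}^n α_i·∇p_i(w). Then m(w) = 1, and the normalized direction u := w/‖w‖ satisfies m(u) > 0 and is a critical direction of the margin on the sphere: there exist λ_1, …, λ_n ≥ 0 with Σλ_i = 1, λ_i = 0 whenever p_i(u) ≠ m(u), such that v := Σ_{i=1}^n λ_i·∇p_i(u) satisfies v − ⟨v,u⟩·u = 0. -/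

import Mathlib

open scoped RealInnerProductSpace

lemma grad_scale {d L : ℕ} (hL : 0 < L) (f : EuclideanSpace ℝ (Fin d) → ℝ)
    (hf : ContDiff ℝ 1 f) (c : ℝ) (hc : 0 < c)
    (hhom : ∀ x, f (c • x) = c ^ L * f x) (w : EuclideanSpace ℝ (Fin d)) :
    gradient f (c • w) = c ^ (L - 1) • gradient f w := by
  have hdiff := hf.differentiable one_ne_zero
  have h1 : HasFDerivAt (fun x : EuclideanSpace ℝ (Fin d) => f (c • x))
      ((fderiv ℝ f (c • w)).comp (c • ContinuousLinearMap.id ℝ (EuclideanSpace ℝ (Fin d)))) w :=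
    (hdiff (c • w)).hasFDerivAt.comp w ((hasFDerivAt_id w).const_smul c)
  have h2 : HasFDerivAt (fun x : EuclideanSpace ℝ (Fin d) => c ^ L * f x)
      ((c ^ L : ℝ) • fderiv ℝ f w) w :=
    ((hdiff w).hasFDerivAt).const_mul (c ^ L)
  have h12 : (fderiv ℝ f (c • w)).comp (c • ContinuousLinearMap.id ℝ (EuclideanSpace ℝ (Fin d)))
      = (c ^ L : ℝ) • fderiv ℝ f w := by
    have h1' := h1.congr_of_eventuallyEq
      (Filter.Eventually.of_forall fun x => (hhom x).symm)
    exact h1'.unique h2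
  have hcomp : (fderiv ℝ f (c • w)).comp (c • ContinuousLinearMap.id ℝ (EuclideanSpace ℝ (Fin d)))
      = c • fderiv ℝ f (c • w) := by
    ext v
    simp [mul_comm]
  rw [hcomp] at h12
  have hfd : fderiv ℝ f (c • w) = c ^ (L - 1) • fderiv ℝ f w := by
    have h3 : c⁻¹ • (c • fderiv ℝ f (c • w)) = c⁻¹ • ((c ^ L : ℝ) • fderiv ℝ f w) := by
      rw [h12]
    rw [smul_smul, smul_smul, inv_mul_cancel₀ hc.ne', one_smul] at h3
    rw [h3]
    congr 1
    rw [pow_sub₀ c hc.ne' hL, pow_one]; ring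
  unfold gradient
  rw [hfd]
  simp

/-- A nonzero KKT point of the max-margin problem (P) has margin exactly one,
and its normalized direction has positive margin and is a critical direction of
the margin on the sphere. -/
theorem stmt_19 {d n L : ℕ} (hd : 0 < d) (hn : 0 < n) (hL : 0 < L)
    (p : Fin n → EuclideanSpace ℝ (Fin d) → ℝ)
    (hp : ∀ i, ContDiff ℝ 1 (p i))
    (hphom : ∀ i, ∀ c : ℝ, 0 < c → ∀ x, p i (c • x) = c ^ L * p i x)
    (w : EuclideanSpace ℝ (Fin d)) (hw0 : w ≠ 0)
    (hfeas : 1 ≤ ⨅ i, p i w)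
    (α : Fin n → ℝ) (hα0 : ∀ i, 0 ≤ α i)
    (hcomp : ∀ i, α i * (p i w - 1) = 0)
    (hstat : w = ∑ i, α i • gradient (p i) w)
    (u : EuclideanSpace ℝ (Fin d)) (hu : u = (‖w‖)⁻¹ • w) :
    (⨅ i, p i w) = 1 ∧ 0 < (⨅ i, p i u) ∧
      ∃ lam : Fin n → ℝ, (∀ i, 0 ≤ lam i) ∧ ∑ i, lam i = 1 ∧
        (∀ i, p i u ≠ (⨅ j, p j u) → lam i = 0) ∧
        (∑ i, lam i • gradient (p i) u) -
          ⟪∑ i, lam i • gradient (p i) u, u⟫ • u = 0 := by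
  haveI : Nonempty (Fin n) := ⟨⟨0, hn⟩⟩
  set c : ℝ := (‖w‖)⁻¹ with hcdef
  have hwpos : (0:ℝ) < ‖w‖ := norm_pos_iff.mpr hw0
  have hc : 0 < c := inv_pos.mpr hwpos
  have hcL : 0 < c ^ L := pow_pos hc L
  -- some multiplier is positive
  have hex : ∃ j, α j ≠ 0 := by
    by_contra h
    push_neg at h
    apply hw0
    rw [hstat]
    simp [h]
  obtain ⟨j, hj⟩ := hex
  have hpj : p j w = 1 := by
    have := hcomp j
    have h' : p j w - 1 = 0 := by
      rcases mul_eq_zero.mp this with h | h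
      · exact absurd h hj
      · exact h
    linarith
  -- bounds on p i w
  have hge : ∀ i, 1 ≤ p i w := fun i =>
    le_trans hfeas (ciInf_le (Finite.bddBelow_range _) i)
  have hinfw : (⨅ i, p i w) = 1 := by
    refine le_antisymm ?_ hfeas
    calc (⨅ i, p i w) ≤ p j w := ciInf_le (Finite.bddBelow_range _) j
    _ = 1 := hpj
  -- values at u
  have hpu : ∀ i, p i u = c ^ L * p i w := by
    intro i
    rw [hu]
    exact hphom i c hc w
  have hinfu : (⨅ i, p i u) = c ^ L := by
    refine le_antisymm ?_ (le_ciInf fun i => ?_)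
    · calc (⨅ i, p i u) ≤ p j u := ciInf_le (Finite.bddBelow_range _) j
      _ = c ^ L := by rw [hpu j, hpj, mul_one]
    · rw [hpu i]
      nlinarith [hge i]
  have hinfu_pos : 0 < (⨅ i, p i u) := hinfu ▸ hcL
  refine ⟨hinfw, hinfu_pos, ?_⟩
  set S : ℝ := ∑ i, α i with hSdef
  have hSpos : 0 < S := by
    apply Finset.sum_pos' (fun i _ => hα0 i)
    exact ⟨j, Finset.mem_univ j, lt_of_le_of_ne (hα0 j) (Ne.symm hj)⟩
  refine ⟨fun i => α i / S, fun i => div_nonneg (hα0 i) hSpos.le, ?_, ?_, ?_⟩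
  · rw [← Finset.sum_div, ← hSdef, div_self hSpos.ne']
  · intro i hi
    have hαi : α i = 0 := by
      by_contra hne
      apply hi
      have hpiw : p i w = 1 := by
        have := hcomp i
        rcases mul_eq_zero.mp this with h | h
        · exact absurd h hne
        · linarith
      rw [hinfu, hpu i, hpiw, mul_one]
    simp [hαi]
  · -- gradient computation
    have hgrad : ∀ i, gradient (p i) u = c ^ (L - 1) • gradient (p i) w := by
      intro i
      rw [hu]
      exact grad_scale hL (p i) (hp i) c hc (fun x => hphom i c hc x) w
    have hnu : ‖u‖ = 1 := by
      rw [hu, norm_smul]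
      simp [abs_of_pos hc, ← hcdef]
      exact inv_mul_cancel₀ hwpos.ne'
    set t : ℝ := c ^ (L - 1) * ‖w‖ / S with htdef
    have hv : (∑ i, (α i / S) • gradient (p i) u) = t • u := by
      have : (∑ i, (α i / S) • gradient (p i) u)
          = (c ^ (L - 1) / S) • ∑ i, α i • gradient (p i) w := by
        rw [Finset.smul_sum]
        refine Finset.sum_congr rfl fun i _ => ?_
        rw [hgrad i, smul_smul, smul_smul]
        congr 1
        field_simp
      rw [this, ← hstat, hu, smul_smul, htdef]
      congr 1
      rw [hcdef]
      field_simp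
    rw [hv, real_inner_smul_left, real_inner_self_eq_norm_sq, hnu]
    simp
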